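/- Let (Ω, μ) be a probability space and u : Ω → ℝ measurable with u > 0 μ-almost everywhere and u integrable, and let Δ ≥ 0. Define g_m(x) = (1/2)·E[u·exp(−u·|x − m|)]. Then for all m, m' ∈ ℝ with |m − m'| ≤ Δ and every measurable set S ⊆ ℝ, ∫_S g_m(x) dx ≤ (E[u] / E[u·exp(−Δ·u)]) · ∫_S g_{m'}(x) dx. Equivalently, the R²DP Laplace mechanism is ln( E[1/b] / M'_{1/b}(−Δq) )-differentially private, where M'_{1/b}(t) = E[u·exp(t·u)] is the derivative of the moment generating function of u = 1/b. -/

import Mathlib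

open MeasureTheory Real Set

private lemma exp_abs_integrable {b : ℝ} (hb : 0 < b) (c : ℝ) :
    Integrable (fun x : ℝ => Real.exp (-(b * |x - c|))) := by
  have h1 : IntegrableOn (fun x : ℝ => Real.exp (-(b * |x|))) (Ici (0 : ℝ)) := by
    rw [integrableOn_Ici_iff_integrableOn_Ioi]
    refine (exp_neg_integrableOn_Ioi 0 hb).congr_fun (fun x hx => ?_) measurableSet_Ioi
    rw [abs_of_pos hx]
    simp only [neg_mul]
  have h2 : IntegrableOn (fun x : ℝ => Real.exp (-(b * |x|))) (Iic (0 : ℝ)) := by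
    have h3 := ((integrable_indicator_iff measurableSet_Ici).2 h1).comp_neg
    rw [← integrable_indicator_iff measurableSet_Iic]
    refine h3.congr (Filter.Eventually.of_forall fun x => ?_)
    by_cases hx : x ≤ 0
    · simp [Set.indicator, neg_nonneg.2 hx, hx, abs_neg]
    · simp [Set.indicator, hx, not_le.1 hx, abs_neg, not_le,
        neg_nonneg, (not_le.1 hx).not_ge]
  have heven : Integrable (fun x : ℝ => Real.exp (-(b * |x|))) := by
    rw [← integrableOn_univ, ← Iic_union_Ioi (a := (0 : ℝ))]
    exact h2.union (h1.mono_set Ioi_subset_Ici_self)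
  exact heven.comp_sub_right c

/-- The R²DP Laplace mechanism is `ln(E[1/b] / M'_{1/b}(-Δq))`-differentially private:
for the compound Laplace density `g_m(x) = (1/2)·E[u·exp(-u·|x-m|)]` with `u = 1/b`,
the output probabilities on any measurable set differ by at most the factor
`E[u] / E[u·exp(-Δ·u)]`. -/
theorem r2dp_laplace_dp {Ω : Type*} [MeasurableSpace Ω] (μ : Measure Ω)
    [IsProbabilityMeasure μ] (u : Ω → ℝ) (hu : Measurable u)
    (hupos : ∀ᵐ ω ∂μ, 0 < u ω) (huint : Integrable u μ)
    (Δ : ℝ) (hΔ : 0 ≤ Δ) (m m' : ℝ) (hmm : |m - m'| ≤ Δ)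
    (S : Set ℝ) (hS : MeasurableSet S) :
    (∫ x in S, (1 / 2) * ∫ ω, u ω * Real.exp (-(u ω) * |x - m|) ∂μ) ≤
      ((∫ ω, u ω ∂μ) / (∫ ω, u ω * Real.exp (-Δ * u ω) ∂μ)) *
        ∫ x in S, (1 / 2) * ∫ ω, u ω * Real.exp (-(u ω) * |x - m'|) ∂μ := by
  -- Notation : I a = ∫ u·exp(-a·u)
  set I : ℝ → ℝ := fun a => ∫ ω, u ω * Real.exp (-(a * u ω)) ∂μ with hI
  -- integrability of the integrands of I
  have hExp : ∀ a : ℝ, 0 ≤ a → Integrable (fun ω => u ω * Real.exp (-(a * u ω))) μ := by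
    intro a ha
    refine huint.abs.mono'
      (hu.aestronglyMeasurable.mul ((hu.const_mul a).neg.exp.aestronglyMeasurable)) ?_
    filter_upwards [hupos] with ω hω
    rw [norm_mul, Real.norm_eq_abs (Real.exp _), abs_of_pos (Real.exp_pos _)]
    refine mul_le_of_le_one_right (norm_nonneg _) ?_
    rw [Real.exp_le_one_iff]
    have : 0 ≤ a * u ω := mul_nonneg ha hω.le
    linarith
  -- monotonicity of I
  have hMono : ∀ a a' : ℝ, 0 ≤ a → a ≤ a' → I a' ≤ I a := by
    intro a a' ha haa'
    refine integral_mono_ae (hExp a' (ha.trans haa')) (hExp a ha) ?_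
    filter_upwards [hupos] with ω hω
    have : a * u ω ≤ a' * u ω := mul_le_mul_of_nonneg_right haa' hω.le
    exact mul_le_mul_of_nonneg_left (Real.exp_le_exp.2 (by linarith)) hω.le
  -- positivity of I
  have hPos : ∀ a : ℝ, 0 ≤ a → 0 < I a := by
    intro a ha
    refine (integral_pos_iff_support_of_nonneg_ae ?_ (hExp a ha)).2 ?_
    · filter_upwards [hupos] with ω hω
      positivity
    · have hmem : ∀ᵐ ω ∂μ, ω ∈ Function.support fun ω => u ω * Real.exp (-(a * u ω)) := by
        filter_upwards [hupos] with ω hω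
        simp only [Function.mem_support]
        positivity
      rw [pos_iff_ne_zero]
      intro h0
      have hc : μ (Function.support fun ω => u ω * Real.exp (-(a * u ω)))ᶜ = 0 := by
        have := ae_iff.1 hmem
        simpa [Set.compl_def] using this
      have hle := measure_union_le (μ := μ)
        (Function.support fun ω => u ω * Real.exp (-(a * u ω)))
        (Function.support fun ω => u ω * Real.exp (-(a * u ω)))ᶜ
      rw [Set.union_compl_self, measure_univ, h0, hc, add_zero] at hle
      simp at hle
  have hEu : 0 ≤ ∫ ω, u ω ∂μ := integral_nonneg_of_ae (hupos.mono fun ω h => h.le)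
  -- Chebyshev-type correlation inequality
  have hCheb : ∀ a b : ℝ, 0 ≤ a → 0 ≤ b →
      I a * I b ≤ (∫ ω, u ω ∂μ) * I (a + b) := by
    intro a b ha hb
    set f : Ω → ℝ := fun ω => u ω * Real.exp (-(a * u ω)) with hf
    set g : Ω → ℝ := fun ω => u ω * Real.exp (-(b * u ω)) with hg
    set h : Ω → ℝ := fun ω => u ω * Real.exp (-((a + b) * u ω)) with hh
    have hfi := hExp a ha
    have hgi := hExp b hb
    have hhi := hExp (a + b) (add_nonneg ha hb)
    have h1 : Integrable (fun p : Ω × Ω => h p.1 * u p.2) (μ.prod μ) := hhi.mul_prod huint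
    have h2 : Integrable (fun p : Ω × Ω => u p.1 * h p.2) (μ.prod μ) := huint.mul_prod hhi
    have h3 : Integrable (fun p : Ω × Ω => f p.1 * g p.2) (μ.prod μ) := hfi.mul_prod hgi
    have h4 : Integrable (fun p : Ω × Ω => g p.1 * f p.2) (μ.prod μ) := hgi.mul_prod hfi
    have hae1 : ∀ᵐ p : Ω × Ω ∂μ.prod μ, 0 < u p.1 :=
      Measure.quasiMeasurePreserving_fst.tendsto_ae.eventually hupos
    have hae2 : ∀ᵐ p : Ω × Ω ∂μ.prod μ, 0 < u p.2 :=
      Measure.quasiMeasurePreserving_snd.tendsto_ae.eventually hupos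
    have key : 0 ≤ ∫ p : Ω × Ω,
        (h p.1 * u p.2 + u p.1 * h p.2 - (f p.1 * g p.2 + g p.1 * f p.2)) ∂μ.prod μ := by
      refine integral_nonneg_of_ae ?_
      filter_upwards [hae1, hae2] with p hp1 hp2
      have e1 : ∀ x : ℝ, Real.exp (-((a + b) * x)) =
          Real.exp (-(a * x)) * Real.exp (-(b * x)) := by
        intro x
        rw [← Real.exp_add]
        ring_nf
      have expand : h p.1 * u p.2 + u p.1 * h p.2 - (f p.1 * g p.2 + g p.1 * f p.2)
          = (u p.1 * u p.2) *
            ((Real.exp (-(a * u p.1)) - Real.exp (-(a * u p.2))) *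
              (Real.exp (-(b * u p.1)) - Real.exp (-(b * u p.2)))) := by
        simp only [hf, hg, hh, e1]
        ring
      rw [expand]
      refine mul_nonneg (mul_nonneg hp1.le hp2.le) ?_
      rcases le_total (u p.1) (u p.2) with hle | hle
      · have e2 : Real.exp (-(a * u p.2)) ≤ Real.exp (-(a * u p.1)) :=
          Real.exp_le_exp.2 (by nlinarith)
        have e3 : Real.exp (-(b * u p.2)) ≤ Real.exp (-(b * u p.1)) :=
          Real.exp_le_exp.2 (by nlinarith)
        nlinarith [mul_nonneg (sub_nonneg.2 e2) (sub_nonneg.2 e3)]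
      · have e2 : Real.exp (-(a * u p.1)) ≤ Real.exp (-(a * u p.2)) :=
          Real.exp_le_exp.2 (by nlinarith)
        have e3 : Real.exp (-(b * u p.1)) ≤ Real.exp (-(b * u p.2)) :=
          Real.exp_le_exp.2 (by nlinarith)
        nlinarith [mul_nonneg (sub_nonneg.2 e2) (sub_nonneg.2 e3)]
    have h12 : Integrable (fun p : Ω × Ω => h p.1 * u p.2 + u p.1 * h p.2) (μ.prod μ) :=
      h1.add h2
    have h34 : Integrable (fun p : Ω × Ω => f p.1 * g p.2 + g p.1 * f p.2) (μ.prod μ) :=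
      h3.add h4
    rw [integral_sub h12 h34, integral_add h1 h2, integral_add h3 h4,
      integral_prod_mul, integral_prod_mul, integral_prod_mul, integral_prod_mul] at key
    simp only [hI]
    nlinarith [key]
  -- product integrability, giving integrability of the compound density in x
  have hprod : ∀ c : ℝ, Integrable (fun p : ℝ × Ω => u p.2 * Real.exp (-(u p.2) * |p.1 - c|))
      ((volume : Measure ℝ).prod μ) := by
    intro c
    have hm1 : Measurable fun p : ℝ × Ω => u p.2 := hu.comp measurable_snd
    have hm2 : Measurable fun p : ℝ × Ω => |p.1 - c| :=
      (measurable_fst.sub measurable_const).abs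
    have hmeas : Measurable (fun p : ℝ × Ω => u p.2 * Real.exp (-(u p.2) * |p.1 - c|)) :=
      hm1.mul ((hm1.neg.mul hm2).exp)
    refine ⟨hmeas.aestronglyMeasurable, ?_⟩
    have hrw := lintegral_prod_symm (μ := (volume : Measure ℝ)) (ν := μ)
      (fun p : ℝ × Ω => ‖u p.2 * Real.exp (-(u p.2) * |p.1 - c|)‖ₑ)
      hmeas.enorm.aemeasurable
    rw [HasFiniteIntegral, hrw]
    have hin : ∀ᵐ ω ∂μ,
        (∫⁻ x : ℝ, ‖u ω * Real.exp (-(u ω) * |x - c|)‖ₑ) = ENNReal.ofReal 2 := by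
      filter_upwards [hupos] with ω hω
      have hintx : Integrable (fun x : ℝ => u ω * Real.exp (-(u ω) * |x - c|)) := by
        have := (exp_abs_integrable hω c).const_mul (u ω)
        simpa [neg_mul] using this
      have hval : (∫ x : ℝ, u ω * Real.exp (-(u ω) * |x - c|)) = 2 := by
        rw [integral_const_mul]
        have hshift : (∫ x : ℝ, Real.exp (-(u ω) * |x - c|))
            = ∫ x : ℝ, Real.exp (-(u ω) * |x|) :=
          integral_sub_right_eq_self (fun x : ℝ => Real.exp (-(u ω) * |x|)) c
        rw [hshift, integral_comp_abs (f := fun y : ℝ => Real.exp (-(u ω) * y))]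
        have hIoi : (∫ x in Ioi (0 : ℝ), Real.exp (-(u ω) * x)) = (u ω)⁻¹ := by
          have h5 := integral_comp_mul_left_Ioi (fun y : ℝ => Real.exp (-y)) 0 hω
          simp only [mul_zero, neg_zero, smul_eq_mul] at h5
          rw [show (fun x : ℝ => Real.exp (-(u ω) * x)) = fun x : ℝ => Real.exp (-(u ω * x))
            by funext x; rw [neg_mul]]
          rw [h5, integral_exp_neg_Ioi_zero, mul_one]
        rw [hIoi]
        field_simp
      calc (∫⁻ x : ℝ, ‖u ω * Real.exp (-(u ω) * |x - c|)‖ₑ)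
          = ∫⁻ x : ℝ, ENNReal.ofReal (u ω * Real.exp (-(u ω) * |x - c|)) := by
            refine lintegral_congr fun x => ?_
            rw [Real.enorm_eq_ofReal (by positivity)]
        _ = ENNReal.ofReal 2 := by
            rw [← ofReal_integral_eq_lintegral_ofReal hintx
              (Filter.Eventually.of_forall fun x => by positivity), hval]
    rw [lintegral_congr_ae hin, lintegral_const, measure_univ, mul_one]
    exact ENNReal.ofReal_lt_top
  have hg_int : ∀ c : ℝ, Integrable
      (fun x : ℝ => ∫ ω, u ω * Real.exp (-(u ω) * |x - c|) ∂μ) volume :=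
    fun c => (hprod c).integral_prod_left
  -- the inner integral is I of the distance
  have hGI : ∀ (c x : ℝ), (∫ ω, u ω * Real.exp (-(u ω) * |x - c|) ∂μ) = I (|x - c|) := by
    intro c x
    refine integral_congr_ae (Filter.Eventually.of_forall fun ω => ?_)
    show u ω * Real.exp (-(u ω) * |x - c|) = u ω * Real.exp (-(|x - c| * u ω))
    rw [neg_mul, mul_comm (u ω) (|x - c|)]
  have hΔeq : (∫ ω, u ω * Real.exp (-Δ * u ω) ∂μ) = I Δ := by
    refine integral_congr_ae (Filter.Eventually.of_forall fun ω => ?_)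
    show u ω * Real.exp (-Δ * u ω) = u ω * Real.exp (-(Δ * u ω))
    rw [neg_mul]
  -- pointwise inequality between the two densities
  have hpt : ∀ x : ℝ, I (|x - m|) ≤ ((∫ ω, u ω ∂μ) / I Δ) * I (|x - m'|) := by
    intro x
    have htri : |x - m| ≤ |x - m'| + Δ := by
      calc |x - m| = |(x - m') + (m' - m)| := by ring_nf
        _ ≤ |x - m'| + |m' - m| := abs_add_le _ _
        _ ≤ |x - m'| + Δ := by
            rw [abs_sub_comm] at hmm ⊢
            linarith [hmm]
    have step1 : I (|x - m|) * I Δ ≤ (∫ ω, u ω ∂μ) * I (|x - m| + Δ) :=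
      hCheb (|x - m|) Δ (abs_nonneg _) hΔ
    have htri' : |x - m'| ≤ |x - m| + Δ := by
      calc |x - m'| = |(x - m) + (m - m')| := by ring_nf
        _ ≤ |x - m| + |m - m'| := abs_add_le _ _
        _ ≤ |x - m| + Δ := by linarith [hmm]
    have step2 : I (|x - m| + Δ) ≤ I (|x - m'|) := hMono _ _ (abs_nonneg _) htri'
    have step3 : I (|x - m|) * I Δ ≤ (∫ ω, u ω ∂μ) * I (|x - m'|) := by
      calc I (|x - m|) * I Δ ≤ (∫ ω, u ω ∂μ) * I (|x - m| + Δ) := step1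
        _ ≤ (∫ ω, u ω ∂μ) * I (|x - m'|) := mul_le_mul_of_nonneg_left step2 hEu
    rw [div_mul_eq_mul_div, le_div_iff₀ (hPos Δ hΔ)]
    linarith [step3]
  -- assemble over S
  rw [hΔeq]
  have hIntm : IntegrableOn
      (fun x : ℝ => (1 / 2 : ℝ) * ∫ ω, u ω * Real.exp (-(u ω) * |x - m|) ∂μ) S :=
    ((hg_int m).const_mul _).integrableOn
  have hIntm' : IntegrableOn
      (fun x : ℝ => ((∫ ω, u ω ∂μ) / I Δ) *
        ((1 / 2 : ℝ) * ∫ ω, u ω * Real.exp (-(u ω) * |x - m'|) ∂μ)) S :=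
    (((hg_int m').const_mul _).const_mul _).integrableOn
  calc (∫ x in S, (1 / 2 : ℝ) * ∫ ω, u ω * Real.exp (-(u ω) * |x - m|) ∂μ)
      ≤ ∫ x in S, ((∫ ω, u ω ∂μ) / I Δ) *
          ((1 / 2 : ℝ) * ∫ ω, u ω * Real.exp (-(u ω) * |x - m'|) ∂μ) := by
        refine setIntegral_mono_on hIntm hIntm' hS fun x _ => ?_
        rw [hGI m x, hGI m' x]
        have := hpt x
        nlinarith [this]
    _ = ((∫ ω, u ω ∂μ) / I Δ) *
          ∫ x in S, (1 / 2 : ℝ) * ∫ ω, u ω * Real.exp (-(u ω) * |x - m'|) ∂μ :=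
        integral_const_mul _ _
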